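/- Let μ be a nonzero σ-finite measure. Then the following are equivalent: (i) μ is atomless; (ii) for every f ∈ L¹(μ) and every ε > 0 there exists ψ ∈ L¹(μ) with ‖ψ‖₁ = ‖f‖₁, ‖f‖₁ − ε < ‖f + ψ‖₁ < ‖f‖₁ + ε, and ‖f‖₁ − ε < ‖f − ψ‖₁ < ‖f‖₁ + ε. -/

import Mathlib

open MeasureTheory
open scoped ENNReal

/-- An atom of a measure `μ`: a measurable set `A` with `0 < μ A < ∞` such that every
measurable subset `B ⊆ A` satisfies `μ B = 0` or `μ B = μ A`. -/
def IsMeasureAtom {α : Type*} [MeasurableSpace α] (μ : Measure α) (A : Set α) : Prop :=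
  MeasurableSet A ∧ 0 < μ A ∧ μ A < ⊤ ∧
    ∀ B, B ⊆ A → MeasurableSet B → μ B = 0 ∨ μ B = μ A

section Aux

variable {α : Type*} [MeasurableSpace α] {μ : Measure α}

/-- From no atoms: every set of positive finite measure contains a subset of at most half
its measure, still positive. -/
lemma IsMeasureAtom.half (h : ∀ A : Set α, ¬ IsMeasureAtom μ A) {A : Set α}
    (hA : MeasurableSet A) (h0 : 0 < μ A) (hfin : μ A < ⊤) :
    ∃ B, B ⊆ A ∧ MeasurableSet B ∧ 0 < μ B ∧ μ B ≤ μ A / 2 := by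
  have hne := h A
  rw [IsMeasureAtom] at hne
  push_neg at hne
  obtain ⟨B, hBA, hBm, hB0, hBne⟩ := hne hA h0 hfin
  have hBfin : μ B < ⊤ := lt_of_le_of_lt (measure_mono hBA) hfin
  have hdiff : μ (A \ B) = μ A - μ B := measure_diff hBA hBm.nullMeasurableSet hBfin.ne
  have hpos : 0 < μ B := pos_iff_ne_zero.mpr hB0
  have hlt : μ B < μ A := lt_of_le_of_ne (measure_mono hBA) hBne
  have hpos' : 0 < μ (A \ B) := by rw [hdiff]; exact tsub_pos_of_lt hlt
  have hsum : μ B + μ (A \ B) = μ A := by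
    rw [hdiff, add_tsub_cancel_of_le (measure_mono hBA)]
  rcases le_total (μ B) (μ (A \ B)) with hle | hle
  · refine ⟨B, hBA, hBm, hpos, ?_⟩
    rw [ENNReal.le_div_iff_mul_le (c := μ A) (Or.inl two_ne_zero) (Or.inl ENNReal.ofNat_ne_top)]
    calc μ B * 2 = μ B + μ B := by ring
    _ ≤ μ B + μ (A \ B) := add_le_add_right hle _
    _ = μ A := hsum
  · refine ⟨A \ B, Set.diff_subset, hA.diff hBm, hpos', ?_⟩
    rw [ENNReal.le_div_iff_mul_le (c := μ A) (Or.inl two_ne_zero) (Or.inl ENNReal.ofNat_ne_top)]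
    calc μ (A \ B) * 2 = μ (A \ B) + μ (A \ B) := by ring
    _ ≤ μ B + μ (A \ B) := add_le_add_left hle _
    _ = μ A := hsum

/-- From no atoms: arbitrarily small positive-measure subsets. -/
lemma IsMeasureAtom.small (h : ∀ A : Set α, ¬ IsMeasureAtom μ A) {A : Set α}
    (hA : MeasurableSet A) (h0 : 0 < μ A) (hfin : μ A < ⊤) {δ : ℝ≥0∞} (hδ : 0 < δ) :
    ∃ B, B ⊆ A ∧ MeasurableSet B ∧ 0 < μ B ∧ μ B ≤ δ := by
  have key : ∀ n : ℕ, ∃ B, B ⊆ A ∧ MeasurableSet B ∧ 0 < μ B ∧ μ B ≤ μ A * 2⁻¹ ^ n := by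
    intro n
    induction n with
    | zero => exact ⟨A, subset_rfl, hA, h0, by simp⟩
    | succ n ih =>
      obtain ⟨B, hBA, hBm, hB0, hBle⟩ := ih
      obtain ⟨C, hCB, hCm, hC0, hCle⟩ :=
        IsMeasureAtom.half h hBm hB0 (lt_of_le_of_lt (measure_mono hBA) hfin)
      refine ⟨C, hCB.trans hBA, hCm, hC0, ?_⟩
      calc μ C ≤ μ B / 2 := hCle
      _ = μ B * 2⁻¹ := by rw [ENNReal.div_eq_inv_mul, mul_comm]
      _ ≤ μ A * 2⁻¹ ^ n * 2⁻¹ := mul_le_mul_left hBle _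
      _ = μ A * 2⁻¹ ^ (n + 1) := by rw [pow_succ, mul_assoc]
  rcases eq_top_or_lt_top δ with hδt | hδt
  · obtain ⟨B, h1, h2, h3, _⟩ := key 0
    exact ⟨B, h1, h2, h3, hδt ▸ le_top⟩
  · have hδμ : δ / μ A ≠ 0 := by
      simp only [ne_eq, ENNReal.div_eq_zero_iff, not_or]
      exact ⟨hδ.ne', hfin.ne⟩
    obtain ⟨n, hn⟩ := ENNReal.exists_inv_two_pow_lt hδμ
    obtain ⟨B, h1, h2, h3, h4⟩ := key n
    refine ⟨B, h1, h2, h3, ?_⟩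
    calc μ B ≤ μ A * 2⁻¹ ^ n := h4
    _ ≤ μ A * (δ / μ A) := mul_le_mul_right hn.le _
    _ = δ := ENNReal.mul_div_cancel h0.ne' hfin.ne

/-- Sierpiński: an atomless measure attains every value below the measure of a finite-measure
set. -/
lemma exists_subset_measure_eq (h : ∀ A : Set α, ¬ IsMeasureAtom μ A) {A : Set α}
    (hA : MeasurableSet A) (hfin : μ A ≠ ⊤) {c : ℝ≥0∞} (hc : c ≤ μ A) :
    ∃ B, B ⊆ A ∧ MeasurableSet B ∧ μ B = c := by
  have hstep : ∀ B : Set α, B ⊆ A → MeasurableSet B → μ B ≤ c →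
      ∃ Q, Q ⊆ A \ B ∧ MeasurableSet Q ∧ μ B + μ Q ≤ c ∧
        ∀ P, P ⊆ A \ B → MeasurableSet P → μ B + μ P ≤ c → μ P ≤ 2 * μ Q := by
    intro B hBA hBm hBc
    set S : Set ℝ≥0∞ := {x | ∃ P, (P ⊆ A \ B ∧ MeasurableSet P ∧ μ B + μ P ≤ c) ∧ μ P = x}
      with hS
    have hmem : ∀ P, P ⊆ A \ B → MeasurableSet P → μ B + μ P ≤ c → μ P ∈ S :=
      fun P h1 h2 h3 => ⟨P, ⟨h1, h2, h3⟩, rfl⟩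
    set t := sSup S with ht
    have htc : t ≤ c := sSup_le fun x ⟨P, ⟨_, _, h3⟩, hx⟩ => hx ▸ le_trans le_add_self h3
    have httop : t ≠ ⊤ := fun htop => (htop ▸ htc).trans_lt (lt_of_le_of_lt hc
      (lt_top_iff_ne_top.mpr hfin)) |>.ne rfl
    rcases eq_or_ne t 0 with ht0 | ht0
    · refine ⟨∅, Set.empty_subset _, MeasurableSet.empty, by simpa using hBc, ?_⟩
      intro P h1 h2 h3
      have := le_sSup (hmem P h1 h2 h3)
      simp only [← ht, ht0] at this
      simpa using this
    · have thalf : t / 2 < t := ENNReal.half_lt_self ht0 httop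
      obtain ⟨x, hxS, hxlt⟩ := lt_sSup_iff.mp thalf
      obtain ⟨Q, ⟨h1, h2, h3⟩, hx⟩ := hxS
      refine ⟨Q, h1, h2, h3, ?_⟩
      intro P hP1 hP2 hP3
      calc μ P ≤ t := le_sSup (hmem P hP1 hP2 hP3)
      _ = 2 * (t / 2) := (ENNReal.mul_div_cancel two_ne_zero ENNReal.ofNat_ne_top).symm
      _ ≤ 2 * μ Q := mul_le_mul_right (hx ▸ hxlt.le) _
  classical
  let T := {B : Set α // B ⊆ A ∧ MeasurableSet B ∧ μ B ≤ c}
  have hstep' : ∀ B : T, ∃ Q, Q ⊆ A \ B.1 ∧ MeasurableSet Q ∧ μ B.1 + μ Q ≤ c ∧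
      ∀ P, P ⊆ A \ B.1 → MeasurableSet P → μ B.1 + μ P ≤ c → μ P ≤ 2 * μ Q :=
    fun B => hstep B.1 B.2.1 B.2.2.1 B.2.2.2
  choose step hsub hmeas hle hmax using hstep'
  have hdisj : ∀ B : T, Disjoint B.1 (step B) :=
    fun B => Set.disjoint_of_subset_right (hsub B) Set.disjoint_sdiff_right
  have hunion : ∀ B : T, μ (B.1 ∪ step B) = μ B.1 + μ (step B) :=
    fun B => measure_union (hdisj B) (hmeas B)
  let F : T → T := fun B => ⟨B.1 ∪ step B,
    Set.union_subset B.2.1 ((hsub B).trans Set.diff_subset),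
    B.2.2.1.union (hmeas B), by rw [hunion B]; exact hle B⟩
  let seq : ℕ → T := fun n => F^[n] ⟨∅, Set.empty_subset _, MeasurableSet.empty, by simp⟩
  have hseq_succ : ∀ n, seq (n + 1) = F (seq n) := fun n => Function.iterate_succ_apply' F n _
  have hmono : Monotone fun n => (seq n).1 := monotone_nat_of_le_succ (fun n => by
    rw [hseq_succ]; exact Set.subset_union_left)
  set Binf := ⋃ n, (seq n).1 with hBinf
  have hBm : MeasurableSet Binf := MeasurableSet.iUnion fun n => (seq n).2.2.1
  have hBsub : Binf ⊆ A := Set.iUnion_subset fun n => (seq n).2.1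
  have hμB : μ Binf = ⨆ n, μ (seq n).1 := hmono.directed_le.measure_iUnion
  have hBle : μ Binf ≤ c := by rw [hμB]; exact iSup_le fun n => (seq n).2.2.2
  refine ⟨Binf, hBsub, hBm, le_antisymm hBle ?_⟩
  by_contra hlt'
  have hlt : μ Binf < c := lt_of_not_ge fun hcon => hlt' hcon
  have hBfin : μ Binf ≠ ⊤ := ((lt_of_lt_of_le hlt hc).trans_le le_top).ne
  have hACfin : μ (A \ Binf) < ⊤ :=
    lt_of_le_of_lt (measure_mono Set.diff_subset) (lt_top_iff_ne_top.mpr hfin)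
  have hACpos : 0 < μ (A \ Binf) := by
    rw [measure_diff hBsub hBm.nullMeasurableSet hBfin]
    exact tsub_pos_of_lt (lt_of_lt_of_le hlt hc)
  obtain ⟨Q, hQsub, hQm, hQ0, hQle⟩ :=
    IsMeasureAtom.small h (hA.diff hBm) hACpos hACfin (δ := c - μ Binf) (tsub_pos_of_lt hlt)
  have key : ∀ n, μ Q ≤ 2 * μ (step (seq n)) := by
    intro n
    refine hmax (seq n) Q (hQsub.trans (Set.diff_subset_diff_right ?_)) hQm ?_
    · exact Set.subset_iUnion (fun n => (seq n).1) n
    · calc μ (seq n).1 + μ Q ≤ μ Binf + (c - μ Binf) :=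
        add_le_add (measure_mono (Set.subset_iUnion (fun n => (seq n).1) n)) hQle
      _ = c := add_tsub_cancel_of_le hlt.le
  have hsum : ∀ N, ∑ n ∈ Finset.range N, μ (step (seq n)) = μ (seq N).1 := by
    intro N
    induction N with
    | zero => simp [seq]
    | succ N ih =>
      rw [Finset.sum_range_succ, ih, hseq_succ]
      exact (hunion (seq N)).symm
  have htsum : ∑' n, μ (step (seq n)) ≠ ⊤ := by
    have : ∑' n, μ (step (seq n)) ≤ c := by
      rw [ENNReal.tsum_eq_iSup_sum' _ Finset.exists_nat_subset_range]
      exact iSup_le fun N => (hsum N).le.trans (hsum N ▸ (seq N).2.2.2)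
    exact (this.trans_lt (lt_of_le_of_lt hc (lt_top_iff_ne_top.mpr hfin))).ne
  have htend : Filter.Tendsto (fun n => μ (step (seq n))) Filter.atTop (nhds 0) :=
    ENNReal.tendsto_atTop_zero_of_tsum_ne_top htsum
  have htend2 : Filter.Tendsto (fun n => 2 * μ (step (seq n))) Filter.atTop (nhds 0) := by
    have := ENNReal.Tendsto.const_mul (a := 2) htend (Or.inr ENNReal.ofNat_ne_top)
    simpa using this
  have : μ Q ≤ 0 := ge_of_tendsto' htend2 key
  exact absurd (le_antisymm this (zero_le)) hQ0.ne'

/-- If `μ` has no atoms then neither does `μ.withDensity g`. -/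
lemma withDensity_noAtom (h : ∀ A : Set α, ¬ IsMeasureAtom μ A) {g : α → ℝ≥0∞}
    (hg : Measurable g) (A : Set α) : ¬ IsMeasureAtom (μ.withDensity g) A := by
  rintro ⟨hAm, h0, hfin, hsub⟩
  set ν := μ.withDensity g with hν
  set E : ℕ → Set α := fun n => A ∩ g ⁻¹' Set.Ioi ((n : ℝ≥0∞) + 1)⁻¹ with hE
  have hEm : ∀ n, MeasurableSet (E n) := fun n => hAm.inter (hg measurableSet_Ioi)
  have hEmono : Monotone E := by
    intro m n hmn
    refine Set.inter_subset_inter_right _ (Set.preimage_mono (Set.Ioi_subset_Ioi ?_))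
    exact ENNReal.inv_le_inv.mpr (add_le_add (by exact_mod_cast Nat.cast_le.mpr hmn) le_rfl)
  have hdiffzero : ν (A \ ⋃ n, E n) = 0 := by
    have hsubzero : A \ (⋃ n, E n) ⊆ {x | g x = 0} := by
      intro x ⟨hxA, hxU⟩
      by_contra hgx
      obtain ⟨n, hn⟩ := ENNReal.exists_inv_nat_lt hgx
      refine hxU (Set.mem_iUnion.mpr ⟨n, hxA, ?_⟩)
      exact lt_of_le_of_lt (ENNReal.inv_le_inv.mpr (le_add_of_nonneg_right zero_le_one)) hn
    refine le_antisymm (le_trans (measure_mono hsubzero) ?_) (zero_le)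
    have hms : MeasurableSet {x | g x = 0} := hg (measurableSet_singleton 0)
    rw [hν, withDensity_apply (s := {x | g x = 0}) g hms]
    rw [setLIntegral_congr_fun hms (fun x hx => hx)]
    simp
  have hup : ν A ≤ ⨆ n, ν (E n) := by
    calc ν A ≤ ν ((⋃ n, E n) ∪ (A \ ⋃ n, E n)) := measure_mono (fun x hx => by
          by_cases hxU : x ∈ ⋃ n, E n
          · exact Set.mem_union_left _ hxU
          · exact Set.mem_union_right _ ⟨hx, hxU⟩)
    _ ≤ ν (⋃ n, E n) + ν (A \ ⋃ n, E n) := measure_union_le _ _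
    _ = ν (⋃ n, E n) := by rw [hdiffzero, add_zero]
    _ = ⨆ n, ν (E n) := hEmono.directed_le.measure_iUnion
  have hex : ∃ n, ν (E n) ≠ 0 := by
    by_contra hcon
    push_neg at hcon
    have : ν A ≤ 0 := by simpa [hcon] using hup
    exact absurd (le_antisymm this (zero_le)) h0.ne'
  obtain ⟨n, hn⟩ := hex
  have hνE : ν (E n) = ν A := by
    rcases hsub (E n) Set.inter_subset_left (hEm n) with h' | h'
    · exact absurd h' hn
    · exact h'
  set k : ℝ≥0∞ := ((n : ℝ≥0∞) + 1)⁻¹ with hk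
  have hk0 : k ≠ 0 := by simp [hk]
  have hbound : ∀ B, B ⊆ E n → MeasurableSet B → k * μ B ≤ ν B := by
    intro B hB hBm
    rw [hν, withDensity_apply g hBm]
    calc k * μ B = ∫⁻ _ in B, k ∂μ := (setLIntegral_const B k).symm
    _ ≤ ∫⁻ x in B, g x ∂μ :=
      setLIntegral_mono hg fun x hx => le_of_lt (hB hx).2
  have hμE0 : 0 < μ (E n) := by
    rcases eq_or_ne (μ (E n)) 0 with h' | h'
    · exact absurd ((withDensity_absolutelyContinuous μ g) h') (hνE ▸ hn)
    · exact pos_iff_ne_zero.mpr h'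
  have hμEfin : μ (E n) < ⊤ := by
    by_contra hcon
    rw [not_lt, top_le_iff] at hcon
    have hle' := hbound (E n) subset_rfl (hEm n)
    rw [hcon, ENNReal.mul_top hk0, top_le_iff, hνE] at hle'
    exact hfin.ne hle'
  refine h (E n) ⟨hEm n, hμE0, hμEfin, ?_⟩
  intro B hB hBm
  rcases hsub B (hB.trans Set.inter_subset_left) hBm with h' | h'
  · left
    have hb := hbound B hB hBm
    rw [h'] at hb
    exact (mul_eq_zero.mp (le_antisymm hb (zero_le))).resolve_left hk0
  · right
    have hνB : ν B = ν (E n) := h'.trans hνE.symm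
    have hνBfin : ν B ≠ ⊤ := by rw [hνB, hνE]; exact hfin.ne
    have hdiff0 : ν (E n \ B) = 0 := by
      rw [measure_diff hB hBm.nullMeasurableSet hνBfin, hνB, tsub_self]
    have hμdiff0 : μ (E n \ B) = 0 := by
      have hb := hbound (E n \ B) Set.diff_subset ((hEm n).diff hBm)
      rw [hdiff0] at hb
      exact (mul_eq_zero.mp (le_antisymm hb (zero_le))).resolve_left hk0
    refine le_antisymm (measure_mono hB) ?_
    calc μ (E n) = μ (B ∪ E n \ B) := by rw [Set.union_diff_cancel hB]
    _ ≤ μ B + μ (E n \ B) := measure_union_le _ _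
    _ = μ B := by rw [hμdiff0, add_zero]

/-- On an atom, every measurable function is a.e. constant. -/
lemma IsMeasureAtom.ae_const {A : Set α} (hA : IsMeasureAtom μ A) {g : α → ℂ}
    (hg : Measurable g) : ∃ c : ℂ, ∀ᵐ x ∂(μ.restrict A), g x = c := by
  obtain ⟨hAm, h0, hfin, hsub⟩ := hA
  have hd := TopologicalSpace.denseRange_denseSeq ℂ
  set u := TopologicalSpace.denseSeq ℂ with hu
  have hstep : ∀ n : ℕ, ∃ k, μ (A ∩ g ⁻¹' Metric.ball (u k) ((1/2) ^ n)) = μ A := by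
    intro n
    by_contra hcon
    push_neg at hcon
    have hzero : ∀ k, μ (A ∩ g ⁻¹' Metric.ball (u k) ((1/2) ^ n)) = 0 := by
      intro k
      rcases hsub _ Set.inter_subset_left (hAm.inter (hg measurableSet_ball)) with h' | h'
      · exact h'
      · exact absurd h' (hcon k)
    have hcover : A ⊆ ⋃ k, A ∩ g ⁻¹' Metric.ball (u k) ((1/2) ^ n) := by
      intro x hx
      obtain ⟨k, hk⟩ := hd.exists_dist_lt (g x) (by positivity : (0:ℝ) < (1/2) ^ n)
      exact Set.mem_iUnion.mpr ⟨k, hx, by simpa [Metric.mem_ball] using hk⟩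
    have := (measure_mono hcover).trans (measure_iUnion_null hzero).le
    exact absurd (le_antisymm this (zero_le)) h0.ne'
  choose k hk using hstep
  set V : ℕ → Set α := fun n => A ∩ g ⁻¹' Metric.ball (u (k n)) ((1/2) ^ n) with hV
  have hVm : ∀ n, MeasurableSet (V n) := fun n => hAm.inter (hg measurableSet_ball)
  set W := ⋂ n, V n with hW
  have hWA : W ⊆ A := (Set.iInter_subset V 0).trans Set.inter_subset_left
  have hAW : μ (A \ W) = 0 := by
    have hsub' : A \ W ⊆ ⋃ n, A \ V n := by
      intro x ⟨hxA, hxW⟩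
      rw [hW, Set.mem_iInter] at hxW
      push_neg at hxW
      obtain ⟨n, hn⟩ := hxW
      exact Set.mem_iUnion.mpr ⟨n, hxA, hn⟩
    refine le_antisymm (le_trans (measure_mono hsub') (measure_iUnion_null fun n => ?_).le)
      (zero_le)
    rw [measure_diff Set.inter_subset_left (hVm n).nullMeasurableSet
      (lt_of_le_of_lt (measure_mono Set.inter_subset_left) hfin).ne, hk n, tsub_self]
  have hWpos : μ W ≠ 0 := by
    intro hW0
    have : μ A ≤ μ (A \ W) + μ W := by
      refine (measure_mono (fun x hx => ?_)).trans (measure_union_le _ _)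
      by_cases hxW : x ∈ W
      · exact Set.mem_union_right _ hxW
      · exact Set.mem_union_left _ ⟨hx, hxW⟩
    rw [hAW, hW0, add_zero] at this
    exact absurd (le_antisymm this (zero_le)) h0.ne'
  obtain ⟨x₀, hx₀⟩ := nonempty_of_measure_ne_zero hWpos
  refine ⟨g x₀, ?_⟩
  have hWconst : ∀ x ∈ W, g x = g x₀ := by
    intro x hx
    have hdist : ∀ n : ℕ, dist (g x) (g x₀) ≤ 2 * (1/2) ^ n := by
      intro n
      have h1 := (Set.mem_iInter.mp hx n).2
      have h2 := (Set.mem_iInter.mp hx₀ n).2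
      rw [Set.mem_preimage, Metric.mem_ball] at h1 h2
      calc dist (g x) (g x₀) ≤ dist (g x) (u (k n)) + dist (g x₀) (u (k n)) :=
        dist_triangle_right _ _ _
      _ ≤ 2 * (1/2) ^ n := by linarith
    have htend : Filter.Tendsto (fun n : ℕ => 2 * (1/2 : ℝ) ^ n) Filter.atTop (nhds 0) := by
      have := tendsto_pow_atTop_nhds_zero_of_lt_one (by norm_num : (0:ℝ) ≤ 1/2)
        (by norm_num : (1/2 : ℝ) < 1)
      simpa using this.const_mul 2
    have : dist (g x) (g x₀) ≤ 0 := ge_of_tendsto' htend hdist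
    exact eq_of_dist_eq_zero (le_antisymm this dist_nonneg)
  rw [ae_restrict_iff' hAm, ae_iff]
  refine measure_mono_null (fun x hx => ?_) hAW
  simp only [Set.mem_setOf_eq] at hx
  push_neg at hx
  exact ⟨hx.1, fun hxW => hx.2 (hWconst x hxW)⟩

end Aux

/-- For a nonzero σ-finite measure `μ`: `μ` is atomless iff for every `f ∈ L¹(μ)` and
`ε > 0` there is `ψ ∈ L¹(μ)` with `‖ψ‖₁ = ‖f‖₁` and
`‖f‖₁ − ε < ‖f ± ψ‖₁ < ‖f‖₁ + ε`. -/
theorem atomless_iff_approx_norm_equation {α : Type*} [MeasurableSpace α]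
    (μ : Measure α) [SigmaFinite μ] (hμ : μ ≠ 0) :
    (∀ A : Set α, ¬ IsMeasureAtom μ A) ↔
      (∀ f : Lp ℂ 1 μ, ∀ ε : ℝ, 0 < ε → ∃ ψ : Lp ℂ 1 μ, ‖ψ‖ = ‖f‖ ∧
        (‖f‖ - ε < ‖f + ψ‖ ∧ ‖f + ψ‖ < ‖f‖ + ε) ∧
        (‖f‖ - ε < ‖f - ψ‖ ∧ ‖f - ψ‖ < ‖f‖ + ε)) := by
  constructor
  · -- atomless implies approximate solvability (indeed exact)
    intro hno f ε hε
    classical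
    set φ : α → ℂ := (Lp.aestronglyMeasurable f).mk f with hφ
    have hφm : StronglyMeasurable φ := (Lp.aestronglyMeasurable f).stronglyMeasurable_mk
    have hφe : ⇑f =ᵐ[μ] φ := (Lp.aestronglyMeasurable f).ae_eq_mk
    set gd : α → ℝ≥0∞ := fun x => (‖φ x‖₊ : ℝ≥0∞) with hgd
    have hgdm : Measurable gd := hφm.measurable.nnnorm.coe_nnreal_ennreal
    set ν := μ.withDensity gd with hν
    have hT : ν Set.univ = eLpNorm f 1 μ := by
      rw [hν, withDensity_apply gd MeasurableSet.univ, Measure.restrict_univ,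
        eLpNorm_one_eq_lintegral_enorm]
      exact lintegral_congr_ae (hφe.symm.fun_comp fun z => ((‖z‖₊ : ℝ≥0∞)))
    have hTfin : ν Set.univ ≠ ⊤ := by rw [hT]; exact (Lp.eLpNorm_lt_top f).ne
    obtain ⟨S, -, hSm, hSν⟩ := exists_subset_measure_eq (withDensity_noAtom hno hgdm)
      MeasurableSet.univ hTfin (ENNReal.half_le_self (a := ν Set.univ))
    have hS : ∫⁻ x in S, gd x ∂μ = ν Set.univ / 2 := by
      rw [← withDensity_apply gd hSm]; exact hSν
    have hTot : ∫⁻ x, gd x ∂μ = ν Set.univ := by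
      rw [hν, withDensity_apply gd MeasurableSet.univ, Measure.restrict_univ]
    have hSc : ∫⁻ x in Sᶜ, gd x ∂μ = ν Set.univ / 2 := by
      have hadd := lintegral_add_compl gd hSm (μ := μ)
      rw [hS, hTot] at hadd
      nth_rewrite 2 [← ENNReal.add_halves (ν Set.univ)] at hadd
      exact (ENNReal.add_right_inj (by
        simp only [ne_eq, ENNReal.div_eq_top]
        simp [hTfin])).mp hadd
    set gψ : α → ℂ := S.piecewise φ (-φ) with hgψ
    have hgm : StronglyMeasurable gψ := hφm.piecewise hSm hφm.neg
    have hnorm_eq : ∀ x, ‖gψ x‖ = ‖φ x‖ := by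
      intro x
      by_cases hx : x ∈ S <;> simp [hgψ, Set.piecewise, hx]
    have heq1 : eLpNorm gψ 1 μ = eLpNorm f 1 μ := by
      rw [eLpNorm_congr_norm_ae (Filter.Eventually.of_forall hnorm_eq), ← eLpNorm_congr_ae hφe]
    have hmem : MemLp gψ 1 μ :=
      ⟨hgm.aestronglyMeasurable, by rw [heq1]; exact Lp.eLpNorm_lt_top f⟩
    refine ⟨hmem.toLp gψ, ?_, ?_⟩
    · rw [Lp.norm_toLp gψ hmem, heq1, Lp.norm_def]
    · have hfnorm : ‖f‖ = (ν Set.univ).toReal := by rw [Lp.norm_def, hT]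
      have hplus : ‖f + hmem.toLp gψ‖ = (ν Set.univ).toReal := by
        rw [Lp.norm_def]
        congr 1
        have hco : ⇑(f + hmem.toLp gψ) =ᵐ[μ] fun x => φ x + gψ x :=
          (Lp.coeFn_add f (hmem.toLp gψ)).trans (hφe.add hmem.coeFn_toLp)
        rw [eLpNorm_congr_ae hco, eLpNorm_one_eq_lintegral_enorm]
        have hpt : ∀ x, (‖φ x + gψ x‖₊ : ℝ≥0∞)
            = S.indicator (fun x => 2 * gd x) x := by
          intro x
          by_cases hx : x ∈ S
          · have : φ x + gψ x = (2 : ℂ) * φ x := by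
              simp only [hgψ, Set.piecewise, hx, if_pos, Pi.neg_apply]
              ring
            simp only [this, Set.indicator_of_mem hx, hgd, nnnorm_mul]
            push_cast
            norm_num
          · have : φ x + gψ x = 0 := by
              simp only [hgψ, Set.piecewise, hx, if_neg, not_false_iff, Pi.neg_apply]
              ring
            simp [this, Set.indicator_of_notMem hx]
        rw [lintegral_congr fun x => (enorm_eq_nnnorm _).trans (hpt x), lintegral_indicator hSm, lintegral_const_mul _ hgdm, hS,
          ENNReal.mul_div_cancel two_ne_zero ENNReal.ofNat_ne_top]
      have hminus : ‖f - hmem.toLp gψ‖ = (ν Set.univ).toReal := by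
        rw [Lp.norm_def]
        congr 1
        have hco : ⇑(f - hmem.toLp gψ) =ᵐ[μ] fun x => φ x - gψ x :=
          (Lp.coeFn_sub f (hmem.toLp gψ)).trans (hφe.sub hmem.coeFn_toLp)
        rw [eLpNorm_congr_ae hco, eLpNorm_one_eq_lintegral_enorm]
        have hpt : ∀ x, (‖φ x - gψ x‖₊ : ℝ≥0∞)
            = Sᶜ.indicator (fun x => 2 * gd x) x := by
          intro x
          by_cases hx : x ∈ S
          · have : φ x - gψ x = 0 := by
              simp only [hgψ, Set.piecewise, hx, if_pos, Pi.neg_apply]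
              ring
            simp [this, Set.indicator_of_notMem (by simpa using hx : x ∉ Sᶜ)]
          · have : φ x - gψ x = (2 : ℂ) * φ x := by
              simp only [hgψ, Set.piecewise, hx, if_neg, not_false_iff, Pi.neg_apply]
              ring
            simp only [this, Set.indicator_of_mem (by simpa using hx : x ∈ Sᶜ), hgd,
              nnnorm_mul]
            push_cast
            norm_num
        rw [lintegral_congr fun x => (enorm_eq_nnnorm _).trans (hpt x), lintegral_indicator hSm.compl, lintegral_const_mul _ hgdm,
          hSc, ENNReal.mul_div_cancel two_ne_zero ENNReal.ofNat_ne_top]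
      rw [hfnorm, hplus, hminus]
      constructor <;> constructor <;> linarith
  · -- approximate solvability implies atomless
    intro hR A hA
    obtain ⟨hAm, h0, hfin, hsub⟩ := id hA
    set m := (μ A).toReal with hm'
    have hm : 0 < m := ENNReal.toReal_pos h0.ne' hfin.ne
    have hmemf : MemLp (A.indicator (fun _ => (1 : ℂ))) 1 μ :=
      memLp_indicator_const 1 hAm 1 (Or.inr hfin.ne)
    set f := hmemf.toLp _ with hf
    have hfco : ⇑f =ᵐ[μ] A.indicator (fun _ => (1 : ℂ)) := hmemf.coeFn_toLp
    have hfnorm : ‖f‖ = m := by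
      rw [hf, Lp.norm_toLp _ hmemf, eLpNorm_one_eq_lintegral_enorm]
      have hpt : ∀ x, (‖A.indicator (fun _ => (1 : ℂ)) x‖₊ : ℝ≥0∞)
          = A.indicator (fun _ => (1 : ℝ≥0∞)) x := by
        intro x
        by_cases hx : x ∈ A <;> simp [hx]
      rw [lintegral_congr fun x => (enorm_eq_nnnorm _).trans (hpt x), lintegral_indicator hAm, setLIntegral_one]
    obtain ⟨ψ, hψn, ⟨hp1, hp2⟩, ⟨hq1, hq2⟩⟩ := hR f (m / 3) (by positivity)
    -- ψ is a.e. constant on the atom A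
    have hΦm : StronglyMeasurable ((Lp.aestronglyMeasurable ψ).mk ψ) :=
      (Lp.aestronglyMeasurable ψ).stronglyMeasurable_mk
    have hΦe : ⇑ψ =ᵐ[μ] (Lp.aestronglyMeasurable ψ).mk ψ := (Lp.aestronglyMeasurable ψ).ae_eq_mk
    obtain ⟨c, hc⟩ := IsMeasureAtom.ae_const hA hΦm.measurable
    have hcψ : ∀ᵐ x ∂(μ.restrict A), (ψ : α → ℂ) x = c := by
      filter_upwards [ae_restrict_of_ae hΦe, hc] with x h1 h2
      rw [h1, h2]
    have hint : Integrable ψ μ := L1.integrable_coeFn ψ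
    set r := ∫ x in Aᶜ, ‖(ψ : α → ℂ) x‖ ∂μ with hr
    have hr0 : 0 ≤ r := integral_nonneg fun x => norm_nonneg _
    have hAint : ∫ x in A, ‖(ψ : α → ℂ) x‖ ∂μ = ‖c‖ * m := by
      have : ∀ᵐ x ∂(μ.restrict A), ‖(ψ : α → ℂ) x‖ = ‖c‖ :=
        hcψ.mono fun x hx => by rw [hx]
      rw [integral_congr_ae this, setIntegral_const, smul_eq_mul, mul_comm]; rfl
    have hsplit : ‖ψ‖ = ‖c‖ * m + r := by
      rw [L1.norm_eq_integral_norm, ← integral_add_compl hAm hint.norm, hAint]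
    have hnψ : ‖c‖ * m + r = m := by rw [← hsplit, hψn, hfnorm]
    have hplus : ‖f + ψ‖ = ‖1 + c‖ * m + r := by
      rw [L1.norm_eq_integral_norm, ← integral_add_compl hAm (L1.integrable_coeFn (f + ψ)).norm]
      congr 1
      · have : ∀ᵐ x ∂(μ.restrict A), ‖(⇑(f + ψ)) x‖ = ‖1 + c‖ := by
          filter_upwards [ae_restrict_mem hAm, ae_restrict_of_ae (Lp.coeFn_add f ψ),
            ae_restrict_of_ae hfco, hcψ] with x hxA hadd hfx hψx
          rw [hadd]
          simp only [Pi.add_apply, hfx, hψx, Set.indicator_of_mem hxA]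
        rw [integral_congr_ae this, setIntegral_const, smul_eq_mul, mul_comm]; rfl
      · refine integral_congr_ae ?_
        filter_upwards [ae_restrict_mem hAm.compl, ae_restrict_of_ae (Lp.coeFn_add f ψ),
          ae_restrict_of_ae hfco] with x hxA hadd hfx
        rw [hadd]
        simp only [Pi.add_apply, hfx, Set.indicator_of_notMem (Set.notMem_of_mem_compl hxA),
          zero_add]
    have hminus : ‖f - ψ‖ = ‖1 - c‖ * m + r := by
      rw [L1.norm_eq_integral_norm, ← integral_add_compl hAm (L1.integrable_coeFn (f - ψ)).norm]
      congr 1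
      · have : ∀ᵐ x ∂(μ.restrict A), ‖(⇑(f - ψ)) x‖ = ‖1 - c‖ := by
          filter_upwards [ae_restrict_mem hAm, ae_restrict_of_ae (Lp.coeFn_sub f ψ),
            ae_restrict_of_ae hfco, hcψ] with x hxA hadd hfx hψx
          rw [hadd]
          simp only [Pi.sub_apply, hfx, hψx, Set.indicator_of_mem hxA]
        rw [integral_congr_ae this, setIntegral_const, smul_eq_mul, mul_comm]; rfl
      · refine integral_congr_ae ?_
        filter_upwards [ae_restrict_mem hAm.compl, ae_restrict_of_ae (Lp.coeFn_sub f ψ),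
          ae_restrict_of_ae hfco] with x hxA hadd hfx
        rw [hadd]
        simp only [Pi.sub_apply, hfx, Set.indicator_of_notMem (Set.notMem_of_mem_compl hxA),
          zero_sub, norm_neg]
    -- derive numeric contradiction
    set a := ‖1 + c‖ with ha'
    set b := ‖1 - c‖ with hb'
    set u := ‖c‖ with hu'
    have ha0 : 0 ≤ a := norm_nonneg _
    have hb0 : 0 ≤ b := norm_nonneg _
    have hu0 : 0 ≤ u := norm_nonneg _
    have hkey : a ^ 2 + b ^ 2 = 2 + 2 * u ^ 2 := by
      rw [ha', hb', hu', Complex.sq_norm, Complex.sq_norm, Complex.sq_norm]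
      simp only [Complex.normSq_apply, Complex.add_re, Complex.add_im, Complex.sub_re,
        Complex.sub_im, Complex.one_re, Complex.one_im]
      ring
    have hua : a * m + r < m + m / 3 := by
      have h := hp2
      rw [hplus, hfnorm] at h
      exact h
    have hub : b * m + r < m + m / 3 := by
      have h := hq2
      rw [hminus, hfnorm] at h
      exact h
    have hA' : a < 1 / 3 + u := by
      have h1 : a * m < (1 / 3 + u) * m := by
        have e : (1 / 3 + u) * m = m / 3 + u * m := by ring
        rw [e]; linarith
      exact lt_of_mul_lt_mul_right h1 hm.le
    have hB' : b < 1 / 3 + u := by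
      have h1 : b * m < (1 / 3 + u) * m := by
        have e : (1 / 3 + u) * m = m / 3 + u * m := by ring
        rw [e]; linarith
      exact lt_of_mul_lt_mul_right h1 hm.le
    have hu1 : u ≤ 1 := by
      have h1 : u * m ≤ 1 * m := by linarith
      exact le_of_mul_le_mul_right h1 hm
    have e2 : (1 / 3 + u) ^ 2 = 1 / 9 + 2 * u / 3 + u ^ 2 := by ring
    have h2 := pow_lt_pow_left₀ hA' ha0 two_ne_zero
    have h3 := pow_lt_pow_left₀ hB' hb0 two_ne_zero
    rw [e2] at h2 h3
    linarith
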